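/- The greedy algorithm for maximizing a monotone submodular function f : 2^M → ℝ with f(∅) = 0 subject to a cardinality constraint k, when run with an α-approximate oracle (which at each step, given the current set S, returns some i ∈ M \ S with f(S ∪ {i}) − f(S) ≥ (1/α) · max_{j ∈ M \ S} (f(S ∪ {j}) − f(S))), produces after k iterations a set S_k satisfying f(S_k) ≥ (1 − e^{−1/α}) · max_{|S| ≤ k} f(S). -/

import Mathlib

lemma greedy_tele {ι : Type*} [DecidableEq ι]
    (M : Finset ι) (f : Finset ι → ℝ)
    (hmono : ∀ A B : Finset ι, A ⊆ B → B ⊆ M → f A ≤ f B)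
    (hsub : ∀ A B : Finset ι, A ⊆ M → B ⊆ M → f A + f B ≥ f (A ∪ B) + f (A ∩ B))
    (A : Finset ι) (hA : A ⊆ M) :
    ∀ T : Finset ι, T ⊆ M →
      f (A ∪ T) - f A ≤ ∑ i ∈ T \ A, (f (insert i A) - f A) := by
  intro T
  induction T using Finset.induction_on with
  | empty => simp
  | @insert x T hxT IH =>
    intro hsubM
    have hx : x ∈ M := hsubM (Finset.mem_insert_self x T)
    have hT : T ⊆ M := fun y hy => hsubM (Finset.mem_insert_of_mem hy)
    by_cases hxA : x ∈ A
    · have h1 : A ∪ insert x T = A ∪ T := by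
        rw [Finset.union_insert, Finset.insert_eq_self.mpr (Finset.mem_union_left T hxA)]
      have h2 : insert x T \ A = T \ A := by
        rw [Finset.insert_sdiff_of_mem T hxA]
      rw [h1, h2]; exact IH hT
    · have h2 : insert x T \ A = insert x (T \ A) := Finset.insert_sdiff_of_notMem T hxA
      have hxTA : x ∉ T \ A := fun h => hxT (Finset.mem_sdiff.mp h).1
      rw [h2, Finset.sum_insert hxTA]
      have hsub' := hsub (insert x A) (A ∪ T) (Finset.insert_subset hx hA)
        (Finset.union_subset hA hT)
      have hint : insert x A ∩ (A ∪ T) = A := by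
        rw [Finset.insert_inter_of_notMem (by simp [hxA, hxT]), Finset.inter_eq_left]
        exact Finset.subset_union_left
      have huni : insert x A ∪ (A ∪ T) = A ∪ insert x T := by
        rw [Finset.insert_union, Finset.union_insert, ← Finset.union_assoc, Finset.union_self]
      rw [hint, huni] at hsub'
      have := IH hT
      linarith

theorem greedy_approx_oracle_submodular_maximization {ι : Type*} [DecidableEq ι]
    (M : Finset ι) (f : Finset ι → ℝ) (h0 : f ∅ = 0)
    (hmono : ∀ A B : Finset ι, A ⊆ B → B ⊆ M → f A ≤ f B)
    (hsub : ∀ A B : Finset ι, A ⊆ M → B ⊆ M → f A + f B ≥ f (A ∪ B) + f (A ∩ B))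
    (k : ℕ) (hk : 1 ≤ k) (hkM : k ≤ M.card)
    (a : ℝ) (ha : 1 ≤ a)
    (S : ℕ → Finset ι) (hS0 : S 0 = ∅)
    (hstep : ∀ j < k, ∃ i ∈ M \ S j,
      S (j + 1) = insert i (S j) ∧
      ∀ i' ∈ M \ S j,
        f (insert i (S j)) - f (S j) ≥ (1 / a) * (f (insert i' (S j)) - f (S j))) :
    ∀ T ⊆ M, T.card ≤ k → f (S k) ≥ (1 - Real.exp (-1 / a)) * f T := by
  intro T hT hTk
  have ha0 : (0:ℝ) < a := lt_of_lt_of_le one_pos ha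
  have hk0 : (0:ℝ) < (k:ℝ) := by exact_mod_cast hk
  have hk1 : (1:ℝ) ≤ (k:ℝ) := by exact_mod_cast hk
  have hak : 1 ≤ a * k := by nlinarith
  have hSM : ∀ j ≤ k, S j ⊆ M := by
    intro j
    induction j with
    | zero => intro _; rw [hS0]; exact Finset.empty_subset M
    | succ n IH =>
      intro hn
      obtain ⟨i, hi, hins, _⟩ := hstep n (lt_of_lt_of_le (Nat.lt_succ_self n) hn)
      rw [hins]
      exact Finset.insert_subset ((Finset.mem_sdiff.mp hi).1)
        (IH (le_of_lt (lt_of_lt_of_le (Nat.lt_succ_self n) hn)))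
  have hfT0 : 0 ≤ f T := by
    have := hmono ∅ T (Finset.empty_subset T) hT
    linarith [h0 ▸ this]
  set r : ℝ := 1 - 1 / (a * k) with hr_def
  have hr0 : 0 ≤ r := by
    have : 1 / (a * k) ≤ 1 := by
      rw [div_le_one (by positivity)]; exact hak
    simp only [hr_def]; linarith
  -- per-step inequality
  have key : ∀ j < k, f T - f (S (j+1)) ≤ r * (f T - f (S j)) := by
    intro j hj
    obtain ⟨i, hi, hins, hor⟩ := hstep j hj
    have hSj : S j ⊆ M := hSM j (le_of_lt hj)
    have hiM : i ∈ M := (Finset.mem_sdiff.mp hi).1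
    set Δ : ℝ := f (S (j+1)) - f (S j) with hΔ
    have hΔ0 : 0 ≤ Δ := by
      have := hmono (S j) (S (j+1)) (by rw [hins]; exact Finset.subset_insert i (S j))
        (hSM (j+1) hj)
      simp only [hΔ]; linarith
    -- f T - f (S j) ≤ a * k * Δ
    have h1 : f T ≤ f (S j ∪ T) :=
      hmono T (S j ∪ T) Finset.subset_union_right (Finset.union_subset hSj hT)
    have h2 := greedy_tele M f hmono hsub (S j) hSj T hT
    have h3 : ∀ i' ∈ T \ S j, f (insert i' (S j)) - f (S j) ≤ a * Δ := by
      intro i' hi'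
      have hi'M : i' ∈ M \ S j := by
        rw [Finset.mem_sdiff] at hi' ⊢
        exact ⟨hT hi'.1, hi'.2⟩
      have h := hor i' hi'M
      rw [hins] at hΔ
      calc f (insert i' (S j)) - f (S j)
          = a * ((1 / a) * (f (insert i' (S j)) - f (S j))) := by field_simp
        _ ≤ a * Δ := by rw [hΔ]; exact mul_le_mul_of_nonneg_left h ha0.le
    have h4 : ∑ i' ∈ T \ S j, (f (insert i' (S j)) - f (S j)) ≤ (T \ S j).card * (a * Δ) := by
      calc _ ≤ ∑ _i' ∈ T \ S j, a * Δ := Finset.sum_le_sum h3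
        _ = (T \ S j).card * (a * Δ) := by rw [Finset.sum_const, nsmul_eq_mul]
    have hcard : ((T \ S j).card : ℝ) ≤ (k : ℝ) := by
      have : (T \ S j).card ≤ T.card := Finset.card_le_card (Finset.sdiff_subset)
      exact_mod_cast le_trans this hTk
    have h5 : f T - f (S j) ≤ (k : ℝ) * (a * Δ) := by
      have : ((T \ S j).card : ℝ) * (a * Δ) ≤ (k : ℝ) * (a * Δ) :=
        mul_le_mul_of_nonneg_right hcard (by positivity)
      nlinarith
    -- conclude
    have hΔge : (f T - f (S j)) / (a * k) ≤ Δ := by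
      rw [div_le_iff₀ (by positivity)]
      nlinarith
    have : f T - f (S (j+1)) = (f T - f (S j)) - Δ := by simp only [hΔ]; ring
    rw [this, hr_def]
    have : (f T - f (S j)) * (1 / (a * k)) ≤ Δ := by
      rw [mul_one_div]; exact hΔge
    nlinarith [this]
  -- geometric decay
  have bound : ∀ j ≤ k, f T - f (S j) ≤ r ^ j * f T := by
    intro j
    induction j with
    | zero => intro _; simp [hS0, h0]
    | succ n IH =>
      intro hn
      have hn' : n < k := lt_of_lt_of_le (Nat.lt_succ_self n) hn
      have h1 := key n hn'
      have h2 := IH (le_of_lt hn')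
      calc f T - f (S (n+1)) ≤ r * (f T - f (S n)) := h1
        _ ≤ r * (r ^ n * f T) := mul_le_mul_of_nonneg_left h2 hr0
        _ = r ^ (n+1) * f T := by ring
  have hfinal := bound k le_rfl
  -- r ^ k ≤ exp (-1/a)
  have hexp : r ^ k ≤ Real.exp (-1 / a) := by
    have h1 : r ≤ Real.exp (-(1 / (a * k))) := by
      have := Real.add_one_le_exp (-(1 / (a * k)))
      simp only [hr_def]; linarith
    have h2 : r ^ k ≤ Real.exp (-(1 / (a * k))) ^ k := pow_le_pow_left₀ hr0 h1 k
    have h3 : Real.exp (-(1 / (a * k))) ^ k = Real.exp ((k : ℝ) * (-(1 / (a * k)))) := by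
      rw [Real.exp_nat_mul]
    have h4 : (k : ℝ) * (-(1 / (a * k))) = -1 / a := by
      field_simp
    rw [h3, h4] at h2
    exact h2
  have : r ^ k * f T ≤ Real.exp (-1 / a) * f T :=
    mul_le_mul_of_nonneg_right hexp hfT0
  linarith
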